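/- Let ℓ = p₁p₂⋯p_t be squarefree with p₁ > p₂ > ⋯ > p_t, fix r ≥ 2, and define the separation divisor 𝔡(ℓ) = p₁⋯p_r · p_{2r} · p_{3r} ⋯ (indices that exist). Then 𝔡(ℓ) ≤ ℓ^(1/r) · p₁^(r−1). -/

import Mathlib

/-- The separation divisor `𝔡(ℓ)` of a squarefree `ℓ = p₁⋯p_t` (primes decreasing):
the product of `p_j` over indices `j` with `j ≤ r` or `r ∣ j`,
i.e. `𝔡 = p₁⋯p_r p_{2r} p_{3r} ⋯`. -/
def sepDiv (r ℓ : ℕ) : ℕ :=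
  ∏ i ∈ Finset.range ℓ.primeFactorsList.reverse.length,
    if i + 1 ≤ r ∨ r ∣ (i + 1) then ℓ.primeFactorsList.reverse.getD i 1 else 1

lemma prod_getD_aux (l : List ℕ) : ∏ i ∈ Finset.range l.length, l.getD i 1 = l.prod := by
  induction l with
  | nil => simp
  | cons a l ih =>
    rw [List.length_cons, Finset.prod_range_succ']
    simp only [List.getD_cons_succ, List.getD_cons_zero, ih, List.prod_cons, mul_comm]

lemma sepDiv_key (q : ℕ → ℕ) (hq : ∀ i j, i ≤ j → q j ≤ q i) (hq1 : ∀ i, 1 ≤ q i)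
    (r : ℕ) (hr : 2 ≤ r) (m : ℕ) :
    (∏ i ∈ Finset.range (r * m), if i + 1 ≤ r ∨ r ∣ (i + 1) then q i else 1) ^ r
      ≤ q 0 ^ (r * (r - 1)) * ∏ i ∈ Finset.range (r * m), q i := by
  induction m with
  | zero => simpa using Nat.one_le_pow _ _ (hq1 0)
  | succ m ih =>
    rw [Nat.mul_succ, Finset.prod_range_add, Finset.prod_range_add, mul_pow]
    rcases Nat.eq_zero_or_pos m with hm | hm
    · subst hm
      simp only [Nat.mul_zero, Finset.range_zero, Finset.prod_empty, one_pow, one_mul,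
        Nat.zero_add]
      have h1 : ∀ i ∈ Finset.range r, (if i + 1 ≤ r ∨ r ∣ (i + 1) then q i else 1) = q i := by
        intro i hi
        exact if_pos (Or.inl (Finset.mem_range.mp hi))
      rw [Finset.prod_congr rfl h1]
      have h2 : ∏ i ∈ Finset.range r, q i ≤ q 0 ^ r := by
        calc ∏ i ∈ Finset.range r, q i ≤ ∏ _i ∈ Finset.range r, q 0 :=
              Finset.prod_le_prod (fun i _ => Nat.zero_le _) (fun i _ => hq 0 i (Nat.zero_le i))
          _ = q 0 ^ r := by simp
      calc (∏ i ∈ Finset.range r, q i) ^ r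
          = (∏ i ∈ Finset.range r, q i) ^ (r - 1) * (∏ i ∈ Finset.range r, q i) ^ 1 := by
            rw [← pow_add]; congr 1; omega
        _ ≤ (q 0 ^ r) ^ (r - 1) * (∏ i ∈ Finset.range r, q i) ^ 1 :=
            Nat.mul_le_mul_right _ (Nat.pow_le_pow_left h2 _)
        _ = q 0 ^ (r * (r - 1)) * ∏ i ∈ Finset.range r, q i := by rw [← pow_mul, pow_one]
    · -- block product is the single term at i = r - 1
      have hrm : r ≤ r * m := Nat.le_mul_of_pos_right r hm
      have hblock : (∏ i ∈ Finset.range r,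
          if r * m + i + 1 ≤ r ∨ r ∣ (r * m + i + 1) then q (r * m + i) else 1)
          = q (r * m + (r - 1)) := by
        rw [Finset.prod_eq_single (r - 1)]
        · rw [if_pos]
          right
          have : r * m + (r - 1) + 1 = r * (m + 1) := by rw [Nat.mul_succ]; omega
          rw [this]
          exact Dvd.intro _ rfl
        · intro b hb hbne
          have hb' : b < r := Finset.mem_range.mp hb
          rw [if_neg]
          push_neg
          refine ⟨by omega, ?_⟩
          intro hdvd
          have hdvd' : r ∣ (b + 1) := by
            have heq : r * m + b + 1 = r * m + (b + 1) := by omega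
            rw [heq] at hdvd
            exact (Nat.dvd_add_right ⟨m, rfl⟩).mp hdvd
          have := Nat.le_of_dvd (by omega) hdvd'
          omega
        · intro h; exact absurd (Finset.mem_range.mpr (by omega)) h
      rw [hblock]
      have hb2 : q (r * m + (r - 1)) ^ r ≤ ∏ i ∈ Finset.range r, q (r * m + i) := by
        calc q (r * m + (r - 1)) ^ r = ∏ _i ∈ Finset.range r, q (r * m + (r - 1)) := by simp
          _ ≤ ∏ i ∈ Finset.range r, q (r * m + i) :=
            Finset.prod_le_prod (fun i _ => Nat.zero_le _)
              (fun i hi => hq _ _ (by have := Finset.mem_range.mp hi; omega))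
      calc (∏ i ∈ Finset.range (r * m), if i + 1 ≤ r ∨ r ∣ (i + 1) then q i else 1) ^ r *
            q (r * m + (r - 1)) ^ r
          ≤ (q 0 ^ (r * (r - 1)) * ∏ i ∈ Finset.range (r * m), q i) *
            ∏ i ∈ Finset.range r, q (r * m + i) := Nat.mul_le_mul ih hb2
        _ = q 0 ^ (r * (r - 1)) *
            ((∏ i ∈ Finset.range (r * m), q i) * ∏ i ∈ Finset.range r, q (r * m + i)) := by
            ring

/-- For squarefree `ℓ` and `r ≥ 2`: `𝔡(ℓ)^r ≤ ℓ · p₁^{r(r-1)}`,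
i.e. `𝔡(ℓ) ≤ ℓ^{1/r} p₁^{r-1}` where `p₁` is the largest prime factor of `ℓ`. -/
theorem stmt19 (r : ℕ) (hr : 2 ≤ r) (ℓ : ℕ) (hℓ : Squarefree ℓ) :
    sepDiv r ℓ ^ r ≤ ℓ * (ℓ.primeFactorsList.reverse.getD 0 1) ^ (r * (r - 1)) := by
  have hℓ0 : ℓ ≠ 0 := hℓ.ne_zero
  set L := ℓ.primeFactorsList.reverse with hLdef
  set q : ℕ → ℕ := fun i => L.getD i 1 with hqdef
  have hq1 : ∀ i, 1 ≤ q i := by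
    intro i
    show 1 ≤ L.getD i 1
    by_cases h : i < L.length
    · rw [List.getD_eq_getElem L 1 h]
      have hmem : L[i] ∈ ℓ.primeFactorsList := by
        rw [← List.mem_reverse]
        exact List.getElem_mem h
      have := (Nat.prime_of_mem_primeFactorsList hmem).two_le
      omega
    · rw [List.getD_eq_default L 1 (le_of_not_gt h)]
  have hpair : ∀ i j (hij : i < j) (hj : j < L.length), L[j]'hj ≤ L[i]'(hij.trans hj) := by
    have hs : L.Pairwise (fun a b => b ≤ a) := by
      rw [hLdef, List.pairwise_reverse]
      exact (Nat.primeFactorsList_sorted ℓ).pairwise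
    intro i j hij hj
    exact List.pairwise_iff_getElem.mp hs i j (lt_trans hij hj) hj hij
  have hq : ∀ i j, i ≤ j → q j ≤ q i := by
    intro i j hij
    rcases eq_or_lt_of_le hij with h | h
    · subst h; exact le_refl _
    by_cases hj : j < L.length
    · show L.getD j 1 ≤ L.getD i 1
      rw [List.getD_eq_getElem L 1 hj, List.getD_eq_getElem L 1 (lt_trans h hj)]
      exact hpair i j h hj
    · have hqj : q j = 1 := List.getD_eq_default L 1 (le_of_not_gt hj)
      rw [hqj]; exact hq1 i
  have hsub : Finset.range L.length ⊆ Finset.range (r * L.length) :=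
    Finset.range_subset_range.mpr (Nat.le_mul_of_pos_left _ (by omega))
  have hprod : ∏ i ∈ Finset.range (r * L.length), q i = ℓ := by
    rw [← Finset.prod_subset hsub (fun x _ hx => by
      simp only [Finset.mem_range, not_lt] at hx
      exact List.getD_eq_default L 1 hx)]
    rw [show (∏ i ∈ Finset.range L.length, q i) = L.prod from prod_getD_aux L]
    rw [hLdef, List.prod_reverse]
    exact Nat.prod_primeFactorsList hℓ0
  have hd : sepDiv r ℓ =
      ∏ i ∈ Finset.range (r * L.length), if i + 1 ≤ r ∨ r ∣ (i + 1) then q i else 1 := by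
    unfold sepDiv
    rw [← hLdef]
    rw [← Finset.prod_subset hsub (fun x _ hx => by
      simp only [Finset.mem_range, not_lt] at hx
      have hx1 : q x = 1 := List.getD_eq_default L 1 hx
      rw [hx1]; simp)]
  calc sepDiv r ℓ ^ r
      = (∏ i ∈ Finset.range (r * L.length),
          if i + 1 ≤ r ∨ r ∣ (i + 1) then q i else 1) ^ r := by rw [hd]
    _ ≤ q 0 ^ (r * (r - 1)) * ∏ i ∈ Finset.range (r * L.length), q i :=
        sepDiv_key q hq hq1 r hr L.length
    _ = ℓ * q 0 ^ (r * (r - 1)) := by rw [hprod, mul_comm]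
    _ = ℓ * (ℓ.primeFactorsList.reverse.getD 0 1) ^ (r * (r - 1)) := rfl
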